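/- Let s > 0 and κ > 0 be real, set q = e^{-2sκ²} (so that 0 < q < 1), and let b ∈ ℂ, y ∈ ℝ, n ∈ ℕ. Then (1/√(2πs))·∫_ℝ H_n(b·e^{iκx}, s|q)·e^{ixy - x²/(2s)} dx = q^{n²/4}·H_n(b·e^{-sκy}, q^{n-3}·s | q^{-1})·e^{-s y²/2}, where q^{n²/4} and q^{n-3} denote real powers of q, and the polynomials are evaluated at complex first arguments. -/

import Mathlib

/-- The q-number `{n}_q = 1 + q + ⋯ + q^{n-1}`. -/
noncomputable def qNum (q : ℝ) (n : ℕ) : ℝ := ∑ k ∈ Finset.range n, q ^ k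

/-- The q-factorial `{n}_q! = Π_{k=1}^n {k}_q`. -/
noncomputable def qFact (q : ℝ) (n : ℕ) : ℝ := ∏ k ∈ Finset.range n, qNum q (k + 1)

/-- The even q-double factorial `{2k}_q!! = Π_{l=1}^k {2l}_q`. -/
noncomputable def qDoubleFact (q : ℝ) (k : ℕ) : ℝ := ∏ l ∈ Finset.range k, qNum q (2 * (l + 1))

/-- The coefficient `c_{n,k}(q) = (-1)^k q^{k(k-1)} {n}_q!/({n-2k}_q!·{2k}_q!!)`. -/
noncomputable def qHermiteCoeff (q : ℝ) (n k : ℕ) : ℝ :=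
  (-1 : ℝ) ^ k * q ^ (k * (k - 1)) * qFact q n / (qFact q (n - 2 * k) * qDoubleFact q k)

/-- The `q⁻¹`-Hermite polynomial `H_n(x,s|q⁻¹) = Σ_{k=0}^{⌊n/2⌋} c_{n,k}(q⁻¹) s^k x^{n-2k}`. -/
noncomputable def qInvHermite (q s : ℝ) (n : ℕ) : Polynomial ℝ :=
  ∑ k ∈ Finset.range (n / 2 + 1),
    Polynomial.C (qHermiteCoeff (1 / q) n k * s ^ k) * Polynomial.X ^ (n - 2 * k)

open scoped Real

/-- `H_n(z,s|q) = Σ_{k=0}^{⌊n/2⌋} c_{n,k}(q) s^k z^{n-2k}` for complex `z`, `s`. -/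
noncomputable def qHermiteC (q : ℝ) (s : ℂ) (n : ℕ) (z : ℂ) : ℂ :=
  ∑ k ∈ Finset.range (n / 2 + 1), (qHermiteCoeff q n k : ℂ) * s ^ k * z ^ (n - 2 * k)

/-- `H_n(z,s|q⁻¹) = Σ_{k=0}^{⌊n/2⌋} c_{n,k}(q⁻¹) s^k z^{n-2k}` for complex `z`, `s`. -/
noncomputable def qInvHermiteC (q : ℝ) (s : ℂ) (n : ℕ) (z : ℂ) : ℂ :=
  ∑ k ∈ Finset.range (n / 2 + 1), (qHermiteCoeff (1 / q) n k : ℂ) * s ^ k * z ^ (n - 2 * k)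

lemma qNum_pos {q : ℝ} (hq : 0 < q) (m : ℕ) : 0 < qNum q (m + 1) := by
  unfold qNum
  exact Finset.sum_pos (fun i _ => by positivity) Finset.nonempty_range_add_one

lemma qFact_pos {q : ℝ} (hq : 0 < q) (n : ℕ) : 0 < qFact q n :=
  Finset.prod_pos fun k _ => qNum_pos hq k

lemma qDoubleFact_pos {q : ℝ} (hq : 0 < q) (k : ℕ) : 0 < qDoubleFact q k := by
  refine Finset.prod_pos fun l _ => ?_
  have h : 2 * (l + 1) = (2 * l + 1) + 1 := by ring
  rw [h]; exact qNum_pos hq _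

lemma qNum_inv {q : ℝ} (hq : q ≠ 0) (m : ℕ) : qNum (1 / q) (m + 1) * q ^ m = qNum q (m + 1) := by
  unfold qNum
  rw [Finset.sum_mul, ← Finset.sum_range_reflect (fun k => q ^ k) (m + 1)]
  refine Finset.sum_congr rfl fun k hk => ?_
  have hk' : k ≤ m := by simpa [Nat.lt_succ_iff] using hk
  rw [div_pow, one_pow, div_mul_eq_mul_div, one_mul, div_eq_mul_inv, ← pow_sub₀ q hq hk']
  congr 1

lemma qFact_inv {q : ℝ} (hq : q ≠ 0) (n : ℕ) :
    qFact (1 / q) n * q ^ (∑ j ∈ Finset.range n, j) = qFact q n := by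
  induction n with
  | zero => simp [qFact]
  | succ n ih =>
    unfold qFact at *
    rw [Finset.prod_range_succ, Finset.prod_range_succ, Finset.sum_range_succ, pow_add,
      ← ih, ← qNum_inv hq n]
    ring

lemma qDoubleFact_inv {q : ℝ} (hq : q ≠ 0) (k : ℕ) :
    qDoubleFact (1 / q) k * q ^ (∑ l ∈ Finset.range k, (2 * l + 1)) = qDoubleFact q k := by
  induction k with
  | zero => simp [qDoubleFact]
  | succ k ih =>
    unfold qDoubleFact at *
    rw [Finset.prod_range_succ, Finset.prod_range_succ, Finset.sum_range_succ, pow_add, ← ih]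
    have h : 2 * (k + 1) = (2 * k + 1) + 1 := by ring
    rw [h, ← qNum_inv hq (2 * k + 1)]
    ring

lemma sum_odd_eq (k : ℕ) : ∑ l ∈ Finset.range k, (2 * l + 1) = k * k := by
  induction k with
  | zero => simp
  | succ k ih => rw [Finset.sum_range_succ, ih]; ring

lemma sum_range_id_add (m j : ℕ) :
    ∑ i ∈ Finset.range (m + j), i
      = (∑ i ∈ Finset.range m, i) + m * j + ∑ i ∈ Finset.range j, i := by
  induction j with
  | zero => simp
  | succ j ih =>
    have h : m + (j + 1) = (m + j) + 1 := by ring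
    rw [h, Finset.sum_range_succ, ih, Finset.sum_range_succ]
    ring

lemma sum_range_id_double (k : ℕ) : (∑ i ∈ Finset.range (2 * k), i) + k = 2 * (k * k) := by
  induction k with
  | zero => simp
  | succ k ih =>
    have h : 2 * (k + 1) = (2 * k) + 1 + 1 := by ring
    rw [h, Finset.sum_range_succ, Finset.sum_range_succ]
    zify at ih ⊢
    linarith

lemma kk_sub (k : ℕ) : k * (k - 1) + k = k * k := by
  cases k with
  | zero => simp
  | succ k => simp only [Nat.succ_sub_one]; ring

lemma coeff_inv {q : ℝ} (hq0 : 0 < q) (n k : ℕ) (hk : 2 * k ≤ n) :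
    qHermiteCoeff (1 / q) n k * q ^ (2 * n * k)
      = qHermiteCoeff q n k * q ^ (k * k + 3 * k) := by
  obtain ⟨m, rfl⟩ : ∃ m, n = m + 2 * k := ⟨n - 2 * k, by omega⟩
  have hq : q ≠ 0 := ne_of_gt hq0
  have hsub : m + 2 * k - 2 * k = m := by omega
  have hFm := (qFact_pos hq0 m).ne'
  have hD := (qDoubleFact_pos hq0 k).ne'
  have e1 : qFact (1 / q) (m + 2 * k)
      = qFact q (m + 2 * k) / q ^ (∑ j ∈ Finset.range (m + 2 * k), j) := by
    rw [eq_div_iff (pow_ne_zero _ hq)]; exact qFact_inv hq _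
  have e2 : qFact (1 / q) m = qFact q m / q ^ (∑ j ∈ Finset.range m, j) := by
    rw [eq_div_iff (pow_ne_zero _ hq)]; exact qFact_inv hq _
  have e3 : qDoubleFact (1 / q) k = qDoubleFact q k / q ^ (k * k) := by
    rw [eq_div_iff (pow_ne_zero _ hq), ← sum_odd_eq k]; exact qDoubleFact_inv hq _
  unfold qHermiteCoeff
  rw [hsub, e1, e2, e3, div_pow, one_pow, sum_range_id_add m (2 * k)]
  obtain ⟨d, hd⟩ : ∃ d, (∑ i ∈ Finset.range (2 * k), i) = d := ⟨_, rfl⟩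
  have hdk : d + k = 2 * (k * k) := by rw [← hd]; exact sum_range_id_double k
  obtain ⟨t, ht⟩ : ∃ t, (∑ i ∈ Finset.range m, i) = t := ⟨_, rfl⟩
  obtain ⟨e, he⟩ : ∃ e, k * (k - 1) = e := ⟨_, rfl⟩
  have hkk : e + k = k * k := by rw [← he]; exact kk_sub k
  rw [hd, ht, he]
  have hexp : t + (k * k) + 2 * (m + 2 * k) * k
      = e + e + (t + m * (2 * k) + d) + (k * k + 3 * k) := by
    zify at hdk hkk ⊢
    nlinarith [hdk, hkk]
  have key : q ^ t * q ^ (k * k) * q ^ (2 * (m + 2 * k) * k)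
      = q ^ e * q ^ e * q ^ (t + m * (2 * k) + d) * q ^ (k * k + 3 * k) := by
    rw [← pow_add, ← pow_add, ← pow_add, ← pow_add, ← pow_add, hexp]
  field_simp
  linear_combination qFact q (m + 2 * k) * key

lemma exp_shuffle (X a b c d e : ℝ) (h : a + b + d = c + e) :
    Real.exp a * (X * Real.exp b / Real.exp c) * Real.exp d = X * Real.exp e := by
  have key : Real.exp a * Real.exp b * Real.exp d = Real.exp e * Real.exp c := by
    rw [← Real.exp_add, ← Real.exp_add, ← Real.exp_add, h, add_comm]
  field_simp [Real.exp_ne_zero]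
  linear_combination X * key


/-- Fourier transform connecting the q- and q⁻¹-Hermite polynomials: with `q = e^{-2sκ²}`,
`(1/√(2πs)) ∫_ℝ H_n(b e^{iκx},s|q) e^{ixy - x²/(2s)} dx
  = q^{n²/4} H_n(b e^{-sκy}, q^{n-3}s | q⁻¹) e^{-sy²/2}`. -/
theorem integral_qHermiteC (s κ : ℝ) (hs : 0 < s) (hκ : 0 < κ) (q : ℝ)
    (hq : q = Real.exp (-(2 * s * κ ^ 2))) (b : ℂ) (y : ℝ) (n : ℕ) :
    (1 / Real.sqrt (2 * π * s) : ℂ) *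
        ∫ x : ℝ, qHermiteC q (s : ℂ) n (b * Complex.exp (Complex.I * (κ : ℂ) * (x : ℂ))) *
          Complex.exp (Complex.I * (x : ℂ) * (y : ℂ) - (x : ℂ) ^ 2 / (2 * (s : ℂ))) =
      ((q ^ ((n : ℝ) ^ 2 / 4) : ℝ) : ℂ) *
        qInvHermiteC q (((q ^ ((n : ℤ) - 3) * s : ℝ) : ℂ)) n
          (b * Complex.exp (-((s : ℂ) * (κ : ℂ) * (y : ℂ)))) *
        Complex.exp (-(s : ℂ) * (y : ℂ) ^ 2 / 2) := by
  have hq0 : 0 < q := by rw [hq]; exact Real.exp_pos _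
  have hq' : q ≠ 0 := ne_of_gt hq0
  have hs' : (s : ℂ) ≠ 0 := by exact_mod_cast hs.ne'
  have hre : ((( -(2 * s)⁻¹ : ℝ) : ℂ)).re < 0 := by
    rw [Complex.ofReal_re]
    exact neg_lt_zero.mpr (by positivity)
  -- rewrite the integrand as a finite sum of Gaussian terms
  have key : ∀ x : ℝ,
      qHermiteC q (s : ℂ) n (b * Complex.exp (Complex.I * (κ : ℂ) * (x : ℂ))) *
          Complex.exp (Complex.I * (x : ℂ) * (y : ℂ) - (x : ℂ) ^ 2 / (2 * (s : ℂ)))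
        = ∑ k ∈ Finset.range (n / 2 + 1),
            ((qHermiteCoeff q n k : ℂ) * (s : ℂ) ^ k * b ^ (n - 2 * k)) *
              Complex.exp ((( -(2 * s)⁻¹ : ℝ) : ℂ) * (x : ℂ) ^ 2 +
                (Complex.I * (((n - 2 * k : ℕ) : ℂ) * (κ : ℂ) + (y : ℂ))) * (x : ℂ) + 0) := by
    intro x
    unfold qHermiteC
    rw [Finset.sum_mul]
    refine Finset.sum_congr rfl fun k _ => ?_
    rw [mul_pow, ← Complex.exp_nat_mul]
    have merge : ∀ (A B : ℂ) (M E F : ℂ), M + E = F →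
        A * (B * Complex.exp M) * Complex.exp E = (A * B) * Complex.exp F := by
      intro A B M E F h
      rw [← h, Complex.exp_add]; ring
    refine merge _ _ _ _ _ ?_
    push_cast
    field_simp
    ring
  simp only [key]
  rw [MeasureTheory.integral_finset_sum _ (fun k _ =>
    (integrable_cexp_quadratic' hre _ _).const_mul _)]
  simp_rw [MeasureTheory.integral_const_mul, integral_cexp_quadratic hre]
  -- the Gaussian constant
  have hconst : ((π : ℂ) / -((( -(2 * s)⁻¹ : ℝ) : ℂ))) ^ (1 / 2 : ℂ)
      = ((Real.sqrt (2 * π * s) : ℝ) : ℂ) := by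
    have h1 : ((π : ℂ) / -((( -(2 * s)⁻¹ : ℝ) : ℂ))) = ((2 * π * s : ℝ) : ℂ) := by
      push_cast
      field_simp
    rw [h1, Real.sqrt_eq_rpow, Complex.ofReal_cpow (by positivity) (1 / 2 : ℝ)]
    norm_num
  simp_rw [hconst]
  have hsqrt : ((Real.sqrt (2 * π * s) : ℝ) : ℂ) ≠ 0 := by
    have : 0 < Real.sqrt (2 * π * s) := Real.sqrt_pos.mpr (by positivity)
    exact_mod_cast this.ne'
  -- expand the RHS and compare termwise
  unfold qInvHermiteC
  rw [Finset.mul_sum, Finset.mul_sum, Finset.sum_mul]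
  refine Finset.sum_congr rfl fun k hk => ?_
  have hkn : 2 * k ≤ n := by
    have : k ≤ n / 2 := by simpa [Nat.lt_succ_iff] using hk
    omega
  have hm : ((n - 2 * k : ℕ) : ℂ) = (n : ℂ) - 2 * (k : ℂ) := by
    push_cast [hkn]; ring
  have hmR : ((n - 2 * k : ℕ) : ℝ) = (n : ℝ) - 2 * (k : ℝ) := by
    push_cast [hkn]; ring
  -- the real scalar identity
  have hreal : q ^ ((n : ℝ) ^ 2 / 4) * qHermiteCoeff (1 / q) n k * (q ^ ((n : ℤ) - 3)) ^ k
      = qHermiteCoeff q n k * Real.exp (-(2 * s * κ ^ 2) * (((n : ℝ) - 2 * k) ^ 2 / 4)) := by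
    have hc : qHermiteCoeff (1 / q) n k
        = qHermiteCoeff q n k * q ^ (k * k + 3 * k) / q ^ (2 * n * k) := by
      rw [eq_div_iff (pow_ne_zero _ hq')]
      exact coeff_inv hq0 n k hkn
    have hrpow : q ^ ((n : ℝ) ^ 2 / 4) = Real.exp (-(2 * s * κ ^ 2) * ((n : ℝ) ^ 2 / 4)) := by
      rw [hq, ← Real.exp_mul]
    have hzpow : (q ^ ((n : ℤ) - 3)) ^ k
        = Real.exp (-(2 * s * κ ^ 2) * (((n : ℝ) - 3) * k)) := by
      rw [hq, ← Real.rpow_intCast, ← Real.exp_mul, ← Real.exp_nat_mul]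
      push_cast
      ring_nf
    have hp1 : q ^ (k * k + 3 * k) = Real.exp (-(2 * s * κ ^ 2) * ((k : ℝ) * k + 3 * k)) := by
      rw [hq, ← Real.exp_nat_mul]
      push_cast
      ring_nf
    have hp2 : q ^ (2 * n * k) = Real.exp (-(2 * s * κ ^ 2) * (2 * (n : ℝ) * k)) := by
      rw [hq, ← Real.exp_nat_mul]
      push_cast
      ring_nf
    rw [hc, hrpow, hzpow, hp1, hp2]
    exact exp_shuffle _ _ _ _ _ _ (by ring)
  have hE : Complex.exp
        (0 - (Complex.I * (((n - 2 * k : ℕ) : ℂ) * (κ : ℂ) + (y : ℂ))) ^ 2 /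
          (4 * (((-(2 * s)⁻¹ : ℝ)) : ℂ)))
      = Complex.exp ((-(2 * s * κ ^ 2) * (((n : ℝ) - 2 * k) ^ 2 / 4) : ℝ) : ℂ) *
          Complex.exp (-((s : ℂ) * (κ : ℂ) * (y : ℂ))) ^ (n - 2 * k) *
          Complex.exp (-(s : ℂ) * (y : ℂ) ^ 2 / 2) := by
    rw [← Complex.exp_nat_mul, ← Complex.exp_add, ← Complex.exp_add]
    congr 1
    rw [mul_pow, Complex.I_sq]
    push_cast [Nat.cast_sub hkn]
    field_simp
    ring
  rw [hE, mul_pow b (Complex.exp (-((s : ℂ) * (κ : ℂ) * (y : ℂ)))) (n - 2 * k),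
    Complex.ofReal_mul (q ^ ((n : ℤ) - 3)) s, mul_pow]
  have hcancel : ∀ (X C E : ℂ), X ≠ 0 → 1 / X * (C * (X * E)) = C * E := by
    intro X C E hX
    field_simp
  rw [hcancel _ _ _ hsqrt]
  have hrealC := congrArg (fun r : ℝ => (r : ℂ)) hreal
  push_cast at hrealC
  linear_combination (norm := (push_cast; ring))
    ((s : ℂ) ^ k * b ^ (n - 2 * k) *
      Complex.exp (-((s : ℂ) * (κ : ℂ) * (y : ℂ))) ^ (n - 2 * k) *
      Complex.exp (-(s : ℂ) * (y : ℂ) ^ 2 / 2)) * hrealC.symm
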